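/- arXiv:2601.09589 — 2 statements merged into one kernel-verified Lean document; each statement's English description precedes it below -/
import Mathlib

section
/- Let σ = Cone(v_1,…,v_{d+1}) be a simplicial cone in ℝ^{d+1} and L : ℝ^{d+1} → ℝ^d the projection forgetting the last coordinate. Suppose L v_{d+1} = Σ_{i=1}^d λ_i L v_i with λ_i ≥ 0 for i < d and λ_d < 0. Then Cone(Lv_1,…,Lv_{d−1},Lv_d) ∪ Cone(Lv_1,…,Lv_{d−1},Lv_{d+1}) contains the image under L of every cone of the form Cone(Lv_j : j ≠ k) for k ∈ {1,…,d+1}; in particular the union over k of the cones Cone(Lv_j : j ≠ k, 1 ≤ j ≤ d+1) with k ranging over one index set equals the union with k ranging over the complementary index set. -/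
/-- The cone of nonnegative linear combinations of a finite family of vectors. -/
def coneOf {ι : Type*} [Fintype ι] {V : Type*} [AddCommMonoid V] [Module ℝ V]
    (w : ι → V) : Set V :=
  {x | ∃ μ : ι → ℝ, (∀ i, 0 ≤ μ i) ∧ x = ∑ i, μ i • w i}

lemma mem_coneOf_of {ι : Type*} [Fintype ι] {V : Type*} [AddCommMonoid V] [Module ℝ V]
    (w : ι → V) (P : ι → Prop) [DecidablePred P] (μ : ι → ℝ)
    (h0 : ∀ i, 0 ≤ μ i) (hz : ∀ i, ¬ P i → μ i = 0) :
    (∑ i, μ i • w i) ∈ coneOf (fun j : {j // P j} => w j) := by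
  refine ⟨fun j => μ j, fun j => h0 j, ?_⟩
  have h1 : ∑ j : {j // P j}, μ (j : ι) • w (j : ι)
      = ∑ j ∈ Finset.univ.filter P, μ j • w j := by
    rw [Finset.sum_subtype (p := P) (Finset.univ.filter P) (by simp) (fun j => μ j • w j)]
  have h2 := Finset.sum_filter_add_sum_filter_not Finset.univ P (fun i => μ i • w i)
  have h3 : ∑ j ∈ Finset.univ.filter (fun i => ¬ P i), μ j • w j = 0 := by
    refine Finset.sum_eq_zero fun j hj => ?_
    rw [hz j (Finset.mem_filter.mp hj).2, zero_smul]
  rw [h1, ← h2, h3, add_zero]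

lemma exists_of_mem_coneOf {ι : Type*} [Fintype ι] {V : Type*} [AddCommMonoid V] [Module ℝ V]
    (w : ι → V) (P : ι → Prop) [DecidablePred P] {x : V}
    (hx : x ∈ coneOf (fun j : {j // P j} => w j)) :
    ∃ μ : ι → ℝ, (∀ i, 0 ≤ μ i) ∧ x = ∑ i, μ i • w i := by
  obtain ⟨μ, h0, rfl⟩ := hx
  refine ⟨fun i => if h : P i then μ ⟨i, h⟩ else 0, fun i => by by_cases h : P i <;> simp [h, h0], ?_⟩
  have h2 := Finset.sum_filter_add_sum_filter_not Finset.univ P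
    (fun i => (if h : P i then μ ⟨i, h⟩ else 0) • w i)
  have h3 : ∑ j ∈ Finset.univ.filter (fun i => ¬ P i),
      (if h : P j then μ ⟨j, h⟩ else 0) • w j = 0 := by
    refine Finset.sum_eq_zero fun j hj => ?_
    rw [dif_neg (Finset.mem_filter.mp hj).2, zero_smul]
  have h1 : ∑ j ∈ Finset.univ.filter P, (if h : P j then μ ⟨j, h⟩ else 0) • w j
      = ∑ j : {j // P j}, μ j • w j := by
    rw [Finset.sum_subtype (p := P) (Finset.univ.filter P) (by simp)
      (fun j => (if h : P j then μ ⟨j, h⟩ else 0) • w j)]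
    exact Finset.sum_congr rfl fun j _ => by rw [dif_pos j.2]
  rw [← h2, h3, add_zero, h1]

/-- under the relation `w_last = Σ λ_i w_i` with `λ_i ≥ 0` for `i < d-1`
and `λ_{d-1} < 0`, every cone spanned by all the `w_j` except one is contained in the
union of the cone omitting the last vector and the cone omitting the `(d-1)`-st vector. -/
theorem stmt8 (d : ℕ) (hd : 0 < d) (w : Fin (d + 1) → (Fin d → ℝ)) (lam : Fin d → ℝ)
    (hrel : w (Fin.last d) = ∑ i : Fin d, lam i • w i.castSucc)
    (hnn : ∀ i : Fin d, (i : ℕ) < d - 1 → 0 ≤ lam i)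
    (hneg : lam ⟨d - 1, by omega⟩ < 0) :
    ∀ k : Fin (d + 1),
      coneOf (fun j : {j : Fin (d + 1) // j ≠ k} => w j) ⊆
        coneOf (fun j : {j : Fin (d + 1) // j ≠ Fin.last d} => w j) ∪
          coneOf (fun j : {j : Fin (d + 1) // (j : ℕ) ≠ d - 1} => w j) := by
  intro k x hx
  obtain ⟨μ, h0, rfl⟩ := exists_of_mem_coneOf w _ hx
  set lam0 : ℝ := lam ⟨d - 1, by omega⟩ with hlam0
  set D : Fin (d + 1) := ⟨d - 1, by omega⟩ with hD
  set lam' : Fin (d + 1) → ℝ := fun j => if h : (j : ℕ) < d then lam ⟨j, h⟩ else 0 with hlam'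
  have hlamD : lam' D = lam0 := by
    simp only [hlam', hD, hlam0]
    rw [dif_pos (by omega)]
  have hlamL : lam' (Fin.last d) = 0 := by
    simp only [hlam', Fin.val_last]
    rw [dif_neg (by omega)]
  have hlamnn : ∀ j : Fin (d + 1), j ≠ Fin.last d → j ≠ D → 0 ≤ lam' j := by
    intro j hjL hjD
    have hjlt : (j : ℕ) < d := by
      rcases Nat.lt_or_ge (j : ℕ) d with h | h
      · exact h
      · refine absurd (Fin.ext ?_) hjL
        have := j.isLt
        simp only [Fin.val_last]
        omega
    have hjne : (j : ℕ) ≠ d - 1 := fun h => hjD (Fin.ext h)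
    simp only [hlam', dif_pos hjlt]
    exact hnn ⟨(j : ℕ), hjlt⟩ (show (j : ℕ) < d - 1 by omega)
  have hsum : ∑ j : Fin (d + 1), lam' j • w j = w (Fin.last d) := by
    rw [Fin.sum_univ_castSucc, hlamL, zero_smul, add_zero, hrel]
    refine Finset.sum_congr rfl fun i _ => ?_
    congr 1
    simp only [hlam', Fin.coe_castSucc]
    rw [dif_pos i.isLt]
  have hDL : D ≠ Fin.last d := fun h => by
    have := congrArg Fin.val h
    simp only [hD, Fin.val_last] at this
    omega
  set a : ℝ := μ D with ha
  set b : ℝ := μ (Fin.last d) with hb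
  by_cases hc : 0 ≤ a + b * lam0
  · -- left cone, omitting the last vector
    left
    set ν : Fin (d + 1) → ℝ :=
      fun j => μ j + b * lam' j - (if j = Fin.last d then b else 0) with hν
    have hsum2 : ∑ i, μ i • w i = ∑ i, ν i • w i := by
      simp only [hν, sub_smul, add_smul, ite_smul, zero_smul, mul_smul]
      rw [Finset.sum_sub_distrib, Finset.sum_add_distrib, ← Finset.smul_sum, hsum,
        Finset.sum_ite_eq' Finset.univ (Fin.last d) (fun j => b • w j)]
      simp
    rw [hsum2]
    refine mem_coneOf_of w _ ν (fun j => ?_) (fun j hj => ?_)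
    · by_cases hjL : j = Fin.last d
      · subst hjL
        have h5 : ν (Fin.last d) = 0 := by simp [hν, hlamL, hb]
        rw [h5]
      · by_cases hjD : j = D
        · subst hjD
          simp only [hν, if_neg hDL, hlamD, ← ha]
          linarith
        · simp only [hν, if_neg hjL]
          have h1 := h0 j
          have h2 := hlamnn j hjL hjD
          have h3 := h0 (Fin.last d)
          nlinarith
    · push_neg at hj
      subst hj
      simp [hν, hlamL, hb]
  · -- right cone, omitting the (d-1)-st vector
    right
    push_neg at hc
    have hlamne : lam0 ≠ 0 := ne_of_lt hneg
    set t : ℝ := a / lam0 with ht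
    have htnp : t ≤ 0 := div_nonpos_of_nonneg_of_nonpos (h0 D) (le_of_lt hneg)
    set ν : Fin (d + 1) → ℝ :=
      fun j => μ j - t * lam' j + (if j = Fin.last d then t else 0) with hν
    have hsum2 : ∑ i, μ i • w i = ∑ i, ν i • w i := by
      simp only [hν, sub_smul, add_smul, ite_smul, zero_smul, mul_smul]
      rw [Finset.sum_add_distrib, Finset.sum_sub_distrib, ← Finset.smul_sum, hsum,
        Finset.sum_ite_eq' Finset.univ (Fin.last d) (fun j => t • w j)]
      simp
    rw [hsum2]
    have hνD : ν D = 0 := by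
      simp only [hν, if_neg hDL, hlamD, ht, ← ha]
      field_simp
      ring
    refine mem_coneOf_of w _ ν (fun j => ?_) (fun j hj => ?_)
    · by_cases hjL : j = Fin.last d
      · subst hjL
        have h5 : ν (Fin.last d) = μ (Fin.last d) + t := by simp [hν, hlamL]
        have h6 : μ (Fin.last d) + a / lam0 = (a + b * lam0) / lam0 := by
          rw [← hb]; field_simp; ring
        have h4 : 0 < (a + b * lam0) / lam0 := div_pos_of_neg_of_neg hc hneg
        rw [h5, ht]
        linarith
      · by_cases hjD : j = D
        · subst hjD; rw [hνD]
        · simp only [hν, if_neg hjL]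
          have h1 := h0 j
          have h2 := hlamnn j hjL hjD
          nlinarith
    · push_neg at hj
      have : j = D := Fin.ext (by simp [hD, hj])
      rw [this, hνD]
end

section
/- Let Δ be a finite set of strongly convex simplicial cones in ℝ^d closed under intersections and faces, whose cone generators are rational. Then for any ε > 0 and any perturbation of the generators within ε small enough, the perturbed cones form a set with the same combinatorial type (same poset of cones under inclusion); in particular the set of generator configurations realizing a fixed simplicial fan combinatorics D is open in (ℝ^d)^m. -/
open Finset Filter

section Aux

variable {d m : ℕ}

noncomputable def extFn (u : Finset (Fin m)) (a : ↥u → ℝ) : Fin m → ℝ :=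
  fun i => if h : i ∈ u then a ⟨i, h⟩ else 0

lemma sum_extFn {β : Type*} [AddCommMonoid β] [Module ℝ β]
    (u : Finset (Fin m)) (a : ↥u → ℝ) (F : Fin m → β) :
    ∑ i ∈ u, extFn u a i • F i = ∑ i : ↥u, a i • F ↑i := by
  rw [← Finset.sum_coe_sort u (fun i => extFn u a i • F i)]
  refine Finset.sum_congr rfl fun i _ => ?_
  simp [extFn]

lemma extFn_nonneg (u : Finset (Fin m)) (a : ↥u → ℝ) (ha : ∀ i, 0 ≤ a i) (i : Fin m) :
    0 ≤ extFn u a i := by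
  unfold extFn; split
  · exact ha _
  · exact le_refl 0

lemma mem_coneOf_iff (g : Fin m → Fin d → ℝ) (s : Finset (Fin m)) (x : Fin d → ℝ) :
    x ∈ coneOf (fun i : ↥s => g ↑i) ↔
      ∃ μ : Fin m → ℝ, (∀ i, 0 ≤ μ i) ∧ x = ∑ i ∈ s, μ i • g i := by
  constructor
  · rintro ⟨μ, hμ, rfl⟩
    exact ⟨extFn s μ, extFn_nonneg s μ hμ, (sum_extFn s μ g).symm⟩
  · rintro ⟨μ, hμ, rfl⟩
    refine ⟨fun i => μ ↑i, fun i => hμ ↑i, ?_⟩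
    rw [Finset.sum_coe_sort s (fun i => μ i • g i)]

lemma li_coeffs {g : Fin m → Fin d → ℝ} {s : Finset (Fin m)}
    (hs : LinearIndependent ℝ (fun i : ↥s => g ↑i)) (a : Fin m → ℝ)
    (h : ∑ i ∈ s, a i • g i = 0) : ∀ i ∈ s, a i = 0 := by
  have h' : ∑ i : ↥s, a ↑i • g ↑i = 0 := by
    rw [Finset.sum_coe_sort s (fun i => a i • g i)]; exact h
  have := Fintype.linearIndependent_iff.mp hs (fun i => a ↑i) h'
  exact fun i hi => this ⟨i, hi⟩

lemma coneOf_subset (g : Fin m → Fin d → ℝ) {s t : Finset (Fin m)} (h : s ⊆ t) :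
    coneOf (fun i : ↥s => g ↑i) ⊆ coneOf (fun i : ↥t => g ↑i) := by
  intro x hx
  rw [mem_coneOf_iff] at hx ⊢
  obtain ⟨μ, hμ, rfl⟩ := hx
  refine ⟨fun i => if i ∈ s then μ i else 0, fun i => by by_cases h : i ∈ s <;> simp [h, hμ i], ?_⟩
  rw [← Finset.sum_subset h (fun i _ hi => by simp [hi])]
  exact Finset.sum_congr rfl fun i hi => by simp [hi]

lemma cone_eq_of_sep (g : Fin m → Fin d → ℝ) (s t : Finset (Fin m))
    (φ : (Fin d → ℝ) →ₗ[ℝ] ℝ)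
    (h0 : ∀ k ∈ s ∩ t, φ (g k) = 0) (hP : ∀ i ∈ s \ t, 0 < φ (g i))
    (hN : ∀ j ∈ t \ s, φ (g j) < 0) :
    coneOf (fun i : ↥(s ∩ t) => g ↑i) =
      coneOf (fun i : ↥s => g ↑i) ∩ coneOf (fun i : ↥t => g ↑i) := by
  apply Set.Subset.antisymm
  · exact Set.subset_inter (coneOf_subset g inter_subset_left)
      (coneOf_subset g inter_subset_right)
  rintro x ⟨hxs, hxt⟩
  rw [mem_coneOf_iff] at hxs hxt ⊢
  obtain ⟨μ, hμ, hx1⟩ := hxs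
  obtain ⟨ν, hν, hx2⟩ := hxt
  have key : ∀ (u v : Finset (Fin m)) (a : Fin m → ℝ), (∀ i, 0 ≤ a i) →
      x = ∑ i ∈ u, a i • g i → φ x = ∑ i ∈ u \ v, a i * φ (g i) + ∑ i ∈ u ∩ v, a i * φ (g i) := by
    intro u v a _ hxe
    rw [hxe, map_sum, ← Finset.sum_union (Finset.disjoint_sdiff_inter u v),
      Finset.sdiff_union_inter]
    exact Finset.sum_congr rfl fun i _ => by simp [smul_eq_mul]
  have hs' : φ x = ∑ i ∈ s \ t, μ i * φ (g i) := by
    have hz : ∑ i ∈ s ∩ t, μ i * φ (g i) = 0 :=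
      Finset.sum_eq_zero fun i hi => by rw [h0 i hi, mul_zero]
    rw [key s t μ hμ hx1, hz, add_zero]
  have ht' : φ x = ∑ j ∈ t \ s, ν j * φ (g j) := by
    have hz : ∑ i ∈ t ∩ s, ν i * φ (g i) = 0 :=
      Finset.sum_eq_zero fun i hi => by
        rw [Finset.inter_comm] at hi; rw [h0 i hi, mul_zero]
    rw [key t s ν hν hx2, hz, add_zero]
  have hle : φ x ≤ 0 := by
    rw [ht']
    exact Finset.sum_nonpos fun j hj => mul_nonpos_of_nonneg_of_nonpos (hν j) (hN j hj).le
  have hge : (0:ℝ) ≤ ∑ i ∈ s \ t, μ i * φ (g i) :=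
    Finset.sum_nonneg fun i hi => mul_nonneg (hμ i) (hP i hi).le
  have hzero : ∑ i ∈ s \ t, μ i * φ (g i) = 0 := le_antisymm (hs' ▸ hle) hge
  have hμ0 : ∀ i ∈ s \ t, μ i = 0 := by
    intro i hi
    have := (Finset.sum_eq_zero_iff_of_nonneg
      (fun i hi => mul_nonneg (hμ i) (hP i hi).le)).mp hzero i hi
    have hpos := hP i hi
    nlinarith
  refine ⟨μ, hμ, ?_⟩
  rw [hx1]
  refine (Finset.sum_subset inter_subset_left (fun i hi hni => ?_)).symm
  have : i ∈ s \ t := Finset.mem_sdiff.mpr ⟨hi, fun hit => hni (Finset.mem_inter.mpr ⟨hi, hit⟩)⟩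
  rw [hμ0 i this, zero_smul]

lemma exists_sep (g : Fin m → Fin d → ℝ) (s t : Finset (Fin m))
    (hs : LinearIndependent ℝ (fun i : ↥s => g ↑i))
    (ht : LinearIndependent ℝ (fun i : ↥t => g ↑i))
    (hcone : coneOf (fun i : ↥(s ∩ t) => g ↑i) =
      coneOf (fun i : ↥s => g ↑i) ∩ coneOf (fun i : ↥t => g ↑i)) :
    ∃ φ : (Fin d → ℝ) →ₗ[ℝ] ℝ, (∀ k ∈ s ∩ t, φ (g k) = 0) ∧
      (∀ i ∈ s \ t, 0 < φ (g i)) ∧ (∀ j ∈ t \ s, φ (g j) < 0) := by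
  classical
  set ι := (↥(s \ t)) ⊕ (↥(t \ s)) with hι
  set v : ι → (Fin d → ℝ) := Sum.elim (fun i => g ↑i) (fun j => -g ↑j) with hv
  set L : (ι → ℝ) →ₗ[ℝ] (Fin d → ℝ) := ∑ p : ι, (LinearMap.proj p).smulRight (v p) with hL
  have hLapp : ∀ w : ι → ℝ, L w = ∑ p : ι, w p • v p := by
    intro w
    simp [hL, LinearMap.sum_apply, LinearMap.smulRight_apply]
  set W : Submodule ℝ (Fin d → ℝ) := Submodule.span ℝ (Set.range fun k : ↥(s ∩ t) => g ↑k)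
    with hW
  set C : Set (Fin d → ℝ) := L '' stdSimplex ℝ ι with hC
  -- disjointness
  have hdisj : Disjoint C (W : Set (Fin d → ℝ)) := by
    rw [Set.disjoint_left]
    rintro x ⟨w, hw, rfl⟩ hxW
    obtain ⟨c, hc⟩ := (Submodule.mem_span_range_iff_exists_fun ℝ).mp hxW
    -- coefficient functions on Fin m
    set wl : Fin m → ℝ := extFn (s \ t) (fun i => w (Sum.inl i)) with hwl
    set wr : Fin m → ℝ := extFn (t \ s) (fun j => w (Sum.inr j)) with hwr
    set cc : Fin m → ℝ := extFn (s ∩ t) c with hcc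
    have hwl0 : ∀ i, 0 ≤ wl i := fun i => by
      simp only [hwl, extFn]; split
      · exact hw.1 _
      · exact le_rfl
    have hwr0 : ∀ i, 0 ≤ wr i := fun i => by
      simp only [hwr, extFn]; split
      · exact hw.1 _
      · exact le_rfl
    have hLw : L w = ∑ i ∈ s \ t, wl i • g i - ∑ j ∈ t \ s, wr j • g j := by
      rw [hLapp, Fintype.sum_sum_type, sum_extFn, sum_extFn]
      simp only [hv, Sum.elim_inl, Sum.elim_inr, smul_neg, sub_eq_add_neg,
        Finset.sum_neg_distrib]
    have hcsum : L w = ∑ k ∈ s ∩ t, cc k • g k := by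
      rw [← hc, sum_extFn]
    have hsum1 : ∑ i ∈ s \ t, wl i + ∑ j ∈ t \ s, wr j = 1 := by
      have := hw.2
      rw [Fintype.sum_sum_type] at this
      rw [show ∑ i ∈ s \ t, wl i = ∑ i : ↥(s \ t), w (Sum.inl i) from ?_,
          show ∑ j ∈ t \ s, wr j = ∑ j : ↥(t \ s), w (Sum.inr j) from ?_]
      · exact this
      · have := sum_extFn (t \ s) (fun j => w (Sum.inr j)) (fun _ => (1:ℝ))
        simpa [smul_eq_mul] using this
      · have := sum_extFn (s \ t) (fun i => w (Sum.inl i)) (fun _ => (1:ℝ))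
        simpa [smul_eq_mul] using this
    -- the element y
    set y : Fin d → ℝ := ∑ i ∈ s \ t, wl i • g i + ∑ k ∈ s ∩ t, max (-cc k) 0 • g k with hy
    have hymax : ∀ x : ℝ, max (-x) 0 - max x 0 = -x := by
      intro x
      rcases le_total 0 x with h | h
      · rw [max_eq_right (neg_nonpos.mpr h), max_eq_left h]; ring
      · rw [max_eq_left (neg_nonneg.mpr h), max_eq_right h]; ring
    have hyt : y = ∑ j ∈ t \ s, wr j • g j + ∑ k ∈ s ∩ t, max (cc k) 0 • g k := by
      have h1 : ∑ k ∈ s ∩ t, max (-cc k) 0 • g k - ∑ k ∈ s ∩ t, max (cc k) 0 • g k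
          = -∑ k ∈ s ∩ t, cc k • g k := by
        rw [← Finset.sum_sub_distrib]
        rw [Finset.sum_congr rfl (fun k _ => by rw [← sub_smul, hymax, neg_smul] :
          ∀ k ∈ s ∩ t, max (-cc k) 0 • g k - max (cc k) 0 • g k = -(cc k • g k))]
        exact Finset.sum_neg_distrib (fun k => cc k • g k)
      have expand : y - (∑ j ∈ t \ s, wr j • g j + ∑ k ∈ s ∩ t, max (cc k) 0 • g k)
          = (∑ i ∈ s \ t, wl i • g i - ∑ j ∈ t \ s, wr j • g j)
            - ∑ k ∈ s ∩ t, cc k • g k := by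
        rw [hy]
        calc ∑ i ∈ s \ t, wl i • g i + ∑ k ∈ s ∩ t, max (-cc k) 0 • g k
            - (∑ j ∈ t \ s, wr j • g j + ∑ k ∈ s ∩ t, max (cc k) 0 • g k)
            = (∑ i ∈ s \ t, wl i • g i - ∑ j ∈ t \ s, wr j • g j)
              + (∑ k ∈ s ∩ t, max (-cc k) 0 • g k - ∑ k ∈ s ∩ t, max (cc k) 0 • g k) := by
              abel
          _ = _ := by rw [h1]; abel
      have hz : y - (∑ j ∈ t \ s, wr j • g j + ∑ k ∈ s ∩ t, max (cc k) 0 • g k) = 0 := by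
        rw [expand, ← hLw, hcsum, sub_self]
      exact sub_eq_zero.mp hz
    have split_s : ∀ F : Fin m → (Fin d → ℝ),
        ∑ i ∈ s, F i = ∑ i ∈ s \ t, F i + ∑ k ∈ s ∩ t, F k := by
      intro F
      rw [← Finset.sum_union (Finset.disjoint_sdiff_inter s t), Finset.sdiff_union_inter]
    have split_t : ∀ F : Fin m → (Fin d → ℝ),
        ∑ j ∈ t, F j = ∑ j ∈ t \ s, F j + ∑ k ∈ s ∩ t, F k := by
      intro F
      rw [Finset.inter_comm s t,
        ← Finset.sum_union (Finset.disjoint_sdiff_inter t s), Finset.sdiff_union_inter]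
    -- y is in both cones
    have hys : y ∈ coneOf (fun i : ↥s => g ↑i) := by
      rw [mem_coneOf_iff]
      refine ⟨fun i => if i ∈ t then max (-cc i) 0 else wl i, fun i => by
        by_cases h : i ∈ t <;> simp [h, le_max_right, hwl0 i], ?_⟩
      rw [split_s (fun i => (if i ∈ t then max (-cc i) 0 else wl i) • g i), hy]
      congr 1
      · exact Finset.sum_congr rfl fun i hi => by simp [(Finset.mem_sdiff.mp hi).2]
      · exact Finset.sum_congr rfl fun k hk => by simp [(Finset.mem_inter.mp hk).2]
    have hyt' : y ∈ coneOf (fun i : ↥t => g ↑i) := by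
      rw [mem_coneOf_iff]
      refine ⟨fun j => if j ∈ s then max (cc j) 0 else wr j, fun j => by
        by_cases h : j ∈ s <;> simp [h, le_max_right, hwr0 j], ?_⟩
      rw [split_t (fun j => (if j ∈ s then max (cc j) 0 else wr j) • g j), hyt]
      congr 1
      · exact Finset.sum_congr rfl fun j hj => by simp [(Finset.mem_sdiff.mp hj).2]
      · exact Finset.sum_congr rfl fun k hk => by simp [(Finset.mem_inter.mp hk).1]
    have hymem : y ∈ coneOf (fun i : ↥(s ∩ t) => g ↑i) := by
      rw [hcone]; exact ⟨hys, hyt'⟩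
    rw [mem_coneOf_iff] at hymem
    obtain ⟨μ, hμ0, hμ⟩ := hymem
    have hwl_zero : ∀ i ∈ s \ t, wl i = 0 := by
      have hrel : ∑ i ∈ s, (if i ∈ t then max (-cc i) 0 - μ i else wl i) • g i = 0 := by
        rw [split_s (fun i => (if i ∈ t then max (-cc i) 0 - μ i else wl i) • g i)]
        have e1 : ∑ i ∈ s \ t, (if i ∈ t then max (-cc i) 0 - μ i else wl i) • g i
            = ∑ i ∈ s \ t, wl i • g i :=
          Finset.sum_congr rfl fun i hi => by simp [(Finset.mem_sdiff.mp hi).2]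
        have e2 : ∑ k ∈ s ∩ t, (if k ∈ t then max (-cc k) 0 - μ k else wl k) • g k
            = ∑ k ∈ s ∩ t, (max (-cc k) 0 • g k - μ k • g k) :=
          Finset.sum_congr rfl fun k hk => by
            simp [(Finset.mem_inter.mp hk).2, sub_smul]
        rw [e1, e2, Finset.sum_sub_distrib]
        have heq : ∑ i ∈ s \ t, wl i • g i + (∑ k ∈ s ∩ t, max (-cc k) 0 • g k
            - ∑ k ∈ s ∩ t, μ k • g k) = y - ∑ k ∈ s ∩ t, μ k • g k := by
          rw [hy]; abel
        rw [heq, ← hμ, sub_self]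
      intro i hi
      have := li_coeffs hs _ hrel i (Finset.mem_sdiff.mp hi).1
      rwa [if_neg (Finset.mem_sdiff.mp hi).2] at this
    have hwr_zero : ∀ j ∈ t \ s, wr j = 0 := by
      have hrel : ∑ j ∈ t, (if j ∈ s then max (cc j) 0 - μ j else wr j) • g j = 0 := by
        rw [split_t (fun j => (if j ∈ s then max (cc j) 0 - μ j else wr j) • g j)]
        have e1 : ∑ j ∈ t \ s, (if j ∈ s then max (cc j) 0 - μ j else wr j) • g j
            = ∑ j ∈ t \ s, wr j • g j :=
          Finset.sum_congr rfl fun j hj => by simp [(Finset.mem_sdiff.mp hj).2]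
        have e2 : ∑ k ∈ s ∩ t, (if k ∈ s then max (cc k) 0 - μ k else wr k) • g k
            = ∑ k ∈ s ∩ t, (max (cc k) 0 • g k - μ k • g k) :=
          Finset.sum_congr rfl fun k hk => by
            simp [(Finset.mem_inter.mp hk).1, sub_smul]
        rw [e1, e2, Finset.sum_sub_distrib]
        have heq : ∑ j ∈ t \ s, wr j • g j + (∑ k ∈ s ∩ t, max (cc k) 0 • g k
            - ∑ k ∈ s ∩ t, μ k • g k) = (∑ j ∈ t \ s, wr j • g j
            + ∑ k ∈ s ∩ t, max (cc k) 0 • g k) - ∑ k ∈ s ∩ t, μ k • g k := by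
          abel
        rw [heq, ← hyt, ← hμ, sub_self]
      intro j hj
      have := li_coeffs ht _ hrel j (Finset.mem_sdiff.mp hj).1
      rwa [if_neg (Finset.mem_sdiff.mp hj).2] at this
    have hcontra : (1:ℝ) = 0 := by
      rw [← hsum1, Finset.sum_eq_zero hwl_zero, Finset.sum_eq_zero hwr_zero, add_zero]
    norm_num at hcontra
  -- apply Hahn-Banach separation
  have hCconv : Convex ℝ C := (convex_stdSimplex ℝ ι).linear_image L
  have hCcomp : IsCompact C := (isCompact_stdSimplex ℝ ι).image L.continuous_of_finiteDimensional
  have hWconv : Convex ℝ (W : Set (Fin d → ℝ)) := W.convex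
  have hWclosed : IsClosed (W : Set (Fin d → ℝ)) := W.closed_of_finiteDimensional
  obtain ⟨f, u, v', hfu, huv, hfW⟩ :=
    geometric_hahn_banach_compact_closed hCconv hCcomp hWconv hWclosed hdisj
  have hfW0 : ∀ x ∈ W, f x = 0 := by
    intro x hx
    by_contra hne
    have hmem : ((v' - 1) / f x) • x ∈ W := W.smul_mem _ hx
    have := hfW _ hmem
    rw [map_smul, smul_eq_mul, div_mul_cancel₀ _ hne] at this
    linarith
  have hv0 : v' < 0 := by
    have := hfW 0 W.zero_mem
    rwa [map_zero] at this
  have hmemC : ∀ p : ι, v p ∈ C := by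
    intro p
    refine ⟨Pi.single p 1, single_mem_stdSimplex ℝ p, ?_⟩
    rw [hLapp]
    rw [Finset.sum_eq_single p (fun q _ hq => by rw [Pi.single_eq_of_ne hq, zero_smul])
      (fun h => absurd (Finset.mem_univ p) h)]
    rw [Pi.single_eq_same, one_smul]
  refine ⟨-f.toLinearMap, ?_, ?_, ?_⟩
  · intro k hk
    have : g k ∈ W := Submodule.subset_span ⟨⟨k, hk⟩, rfl⟩
    simp [hfW0 _ this]
  · intro i hi
    have := hfu _ (hmemC (Sum.inl ⟨i, hi⟩))
    simp only [hv, Sum.elim_inl] at this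
    simp only [LinearMap.neg_apply, ContinuousLinearMap.coe_coe]
    linarith
  · intro j hj
    have := hfu _ (hmemC (Sum.inr ⟨j, hj⟩))
    simp only [hv, Sum.elim_inr, map_neg] at this
    simp only [LinearMap.neg_apply, ContinuousLinearMap.coe_coe]
    linarith

lemma perturb (g : Fin m → Fin d → ℝ) (K P N : Finset (Fin m))
    (hK : LinearIndependent ℝ (fun k : ↥K => g ↑k))
    (φ : (Fin d → ℝ) →ₗ[ℝ] ℝ)
    (h0 : ∀ k ∈ K, φ (g k) = 0) (hP : ∀ i ∈ P, 0 < φ (g i))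
    (hN : ∀ j ∈ N, φ (g j) < 0) :
    ∀ᶠ g' in nhds g, ∃ φ' : (Fin d → ℝ) →ₗ[ℝ] ℝ,
      (∀ k ∈ K, φ' (g' k) = 0) ∧ (∀ i ∈ P, 0 < φ' (g' i)) ∧ (∀ j ∈ N, φ' (g' j) < 0) := by
  classical
  -- dual functionals
  set f : (↥K → ℝ) →ₗ[ℝ] (Fin d → ℝ) := ∑ k : ↥K, (LinearMap.proj k).smulRight (g ↑k) with hf
  have hfapp : ∀ c : ↥K → ℝ, f c = ∑ k : ↥K, c k • g ↑k := by
    intro c; simp [hf, LinearMap.sum_apply, LinearMap.smulRight_apply]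
  have hfker : LinearMap.ker f = ⊥ := by
    rw [LinearMap.ker_eq_bot']
    intro c hc
    rw [hfapp] at hc
    exact funext (Fintype.linearIndependent_iff.mp hK c hc)
  obtain ⟨r, hr⟩ := f.exists_leftInverse_of_injective hfker
  set ψ : ↥K → ((Fin d → ℝ) →ₗ[ℝ] ℝ) := fun l => (LinearMap.proj l).comp r with hψ
  have hψg : ∀ l k : ↥K, ψ l (g ↑k) = if k = l then 1 else 0 := by
    intro l k
    have hgk : g ↑k = f (Pi.single k 1) := by
      rw [hfapp]
      rw [Finset.sum_eq_single k (fun q _ hq => by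
        rw [Pi.single_eq_of_ne hq, zero_smul]) (fun h => absurd (Finset.mem_univ k) h)]
      rw [Pi.single_eq_same, one_smul]
    rw [hψ, hgk]
    have : r (f (Pi.single k 1)) = Pi.single k 1 := by
      have := LinearMap.congr_fun hr (Pi.single k 1)
      simpa using this
    simp only [LinearMap.coe_comp, Function.comp_apply, this, LinearMap.proj_apply,
      Pi.single_apply]
    exact if_congr eq_comm rfl rfl
  -- matrix and correction
  set M : (Fin m → Fin d → ℝ) → Matrix ↥K ↥K ℝ :=
    fun h => Matrix.of fun k l => ψ l (h ↑k) with hM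
  set b : (Fin m → Fin d → ℝ) → (↥K → ℝ) := fun h k => φ (h ↑k) with hb
  set cv : (Fin m → Fin d → ℝ) → (↥K → ℝ) := fun h => -(M h)⁻¹.mulVec (b h) with hcv
  set φ' : (Fin m → Fin d → ℝ) → ((Fin d → ℝ) →ₗ[ℝ] ℝ) :=
    fun h => φ + ∑ l : ↥K, cv h l • ψ l with hφ'
  have hMg : M g = 1 := by
    ext k l
    rw [hM]
    simp only [Matrix.of_apply, hψg l k, Matrix.one_apply]
  -- continuity facts
  have hMcont : Continuous M := by
    apply continuous_matrix
    intro k l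
    exact (ψ l).continuous_of_finiteDimensional.comp (continuous_apply (↑k : Fin m))
  have hdetcont : Continuous fun h => (M h).det := hMcont.matrix_det
  have hdetg : (M g).det = 1 := by rw [hMg, Matrix.det_one]
  have hdet_ne : ∀ᶠ h in nhds g, (M h).det ≠ 0 := by
    have : ContinuousAt (fun h => (M h).det) g := hdetcont.continuousAt
    have h1 : (fun h => (M h).det) g ≠ 0 := by show (M g).det ≠ 0; rw [hdetg]; exact one_ne_zero
    exact this.eventually_ne h1
  have hinvcont : ContinuousAt (fun h => (M h)⁻¹) g := by
    have : ContinuousAt Inv.inv (M g) := by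
      apply continuousAt_matrix_inv
      rw [Ring.inverse_eq_inv']
      rw [hdetg]
      exact continuousAt_inv₀ one_ne_zero
    exact this.comp hMcont.continuousAt
  have hbcont : Continuous b := by
    apply continuous_pi
    intro k
    exact φ.continuous_of_finiteDimensional.comp (continuous_apply (↑k : Fin m))
  have hcvcont : ContinuousAt cv g := by
    rw [hcv]
    apply ContinuousAt.neg
    apply continuousAt_pi.mpr
    intro k
    have : (fun h => ((M h)⁻¹.mulVec (b h)) k)
        = fun h => ∑ l : ↥K, (M h)⁻¹ k l * b h l := by
      funext h
      simp [Matrix.mulVec, dotProduct]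
    rw [this]
    apply tendsto_finset_sum
    intro l _
    exact (((continuous_apply l).comp (continuous_apply k)).continuousAt.comp hinvcont).mul
      ((continuous_apply l).comp hbcont).continuousAt
  have hcvg : cv g = 0 := by
    have hbg : b g = 0 := by
      funext k
      exact h0 ↑k k.2
    rw [hcv]
    simp [hbg]
  -- evaluation formula
  have heval : ∀ h : Fin m → Fin d → ℝ, ∀ x : Fin d → ℝ,
      φ' h x = φ x + ∑ l : ↥K, cv h l * ψ l x := by
    intro h x
    simp [hφ', LinearMap.sum_apply, LinearMap.smul_apply, smul_eq_mul]
  -- zero condition when det ≠ 0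
  have hzero : ∀ h : Fin m → Fin d → ℝ, (M h).det ≠ 0 → ∀ k ∈ K, φ' h (h k) = 0 := by
    intro h hdet k hk
    have hk' : (⟨k, hk⟩ : ↥K) = ⟨k, hk⟩ := rfl
    rw [heval]
    have : ∑ l : ↥K, cv h l * ψ l (h k) = ((M h).mulVec (cv h)) ⟨k, hk⟩ := by
      simp only [Matrix.mulVec, dotProduct, hM, Matrix.of_apply]
      exact Finset.sum_congr rfl fun l _ => mul_comm _ _
    rw [this]
    have : (M h).mulVec (cv h) = -(b h) := by
      rw [hcv, Matrix.mulVec_neg, Matrix.mulVec_mulVec,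
        Matrix.mul_nonsing_inv _ (isUnit_iff_ne_zero.mpr hdet), Matrix.one_mulVec]
    rw [this]
    simp [hb]
  -- sign conditions eventually
  have hsigncont : ∀ i : Fin m, ContinuousAt (fun h => φ' h (h i)) g := by
    intro i
    have : (fun h : Fin m → Fin d → ℝ => φ' h (h i))
        = fun h => φ (h i) + ∑ l : ↥K, cv h l * ψ l (h i) := by
      funext h; rw [heval]
    rw [this]
    apply ContinuousAt.add
    · exact (φ.continuous_of_finiteDimensional.comp (continuous_apply i)).continuousAt
    · apply tendsto_finset_sum
      intro l _
      exact ((continuous_apply l).continuousAt.comp hcvcont).mul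
        ((ψ l).continuous_of_finiteDimensional.comp (continuous_apply i)).continuousAt
  have hsigng : ∀ i : Fin m, φ' g (g i) = φ (g i) := by
    intro i
    rw [heval, hcvg]
    simp
  have hPev : ∀ᶠ h in nhds g, ∀ i ∈ P, 0 < φ' h (h i) := by
    rw [eventually_all_finset]
    intro i hi
    have := (hsigncont i) (Ioi_mem_nhds (by rw [hsigng i]; exact hP i hi : (0:ℝ) < φ' g (g i)))
    exact this
  have hNev : ∀ᶠ h in nhds g, ∀ j ∈ N, φ' h (h j) < 0 := by
    rw [eventually_all_finset]
    intro j hj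
    exact (hsigncont j) (Iio_mem_nhds (by rw [hsigng j]; exact hN j hj : φ' g (g j) < 0))
  filter_upwards [hdet_ne, hPev, hNev] with h h1 h2 h3
  exact ⟨φ' h, hzero h h1, h2, h3⟩

end Aux

/-- the set of configurations of ray generators realizing a fixed
simplicial fan combinatorics `D` (each cone simplicial — hence strongly convex — and
cones intersecting along the cones given by the poset `D`) is open in `(ℝ^d)^m`;
equivalently, sufficiently small perturbations of the generators do not change the
combinatorial type. -/
theorem stmt17 (d m : ℕ) (D : Finset (Finset (Fin m))) :
    IsOpen {g : Fin m → (Fin d → ℝ) |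
      (∀ s ∈ D, LinearIndependent ℝ (fun i : (s : Finset (Fin m)) => g i)) ∧
      (∀ s ∈ D, ∀ t ∈ D, s ∩ t ∈ D ∧
        coneOf (fun i : ((s ∩ t : Finset (Fin m)) : Finset (Fin m)) => g i) =
          coneOf (fun i : (s : Finset (Fin m)) => g i) ∩
            coneOf (fun i : (t : Finset (Fin m)) => g i))} := by
  classical
  rw [isOpen_iff_mem_nhds]
  rintro g ⟨hLI, hpairs⟩
  have hLIopen : IsOpen {g' : Fin m → Fin d → ℝ |
      ∀ s ∈ D, LinearIndependent ℝ (fun i : ↥s => g' ↑i)} := by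
    have heq : {g' : Fin m → Fin d → ℝ | ∀ s ∈ D, LinearIndependent ℝ (fun i : ↥s => g' ↑i)}
        = ⋂ s ∈ D, {g' : Fin m → Fin d → ℝ | LinearIndependent ℝ (fun i : ↥s => g' ↑i)} := by
      ext g'; simp
    rw [heq]
    refine isOpen_biInter_finset fun s _ => ?_
    have hc : Continuous (fun g' : Fin m → Fin d → ℝ => fun i : ↥s => g' ↑i) :=
      continuous_pi fun i => continuous_apply (↑i : Fin m)
    exact isOpen_setOf_linearIndependent.preimage hc
  have hev : ∀ᶠ g' in nhds g, ∀ s ∈ D, ∀ t ∈ D, ∃ φ' : (Fin d → ℝ) →ₗ[ℝ] ℝ,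
      (∀ k ∈ s ∩ t, φ' (g' k) = 0) ∧ (∀ i ∈ s \ t, 0 < φ' (g' i)) ∧
        (∀ j ∈ t \ s, φ' (g' j) < 0) := by
    rw [eventually_all_finset]
    intro s hsD
    rw [eventually_all_finset]
    intro t htD
    have hLIst : LinearIndependent ℝ (fun k : ↥(s ∩ t) => g ↑k) := by
      have := (hLI s hsD).comp
        (fun k : ↥(s ∩ t) => (⟨↑k, (Finset.mem_inter.mp k.2).1⟩ : ↥s))
        (fun a b hab => Subtype.ext (by
          have := congrArg (fun x : ↥s => (x : Fin m)) hab
          simpa using this))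
      exact this
    obtain ⟨φ, hφ0, hφP, hφN⟩ := exists_sep g s t (hLI s hsD) (hLI t htD)
      ((hpairs s hsD t htD).2)
    exact perturb g (s ∩ t) (s \ t) (t \ s) hLIst φ hφ0 hφP hφN
  have hLImem : g ∈ {g' : Fin m → Fin d → ℝ |
      ∀ s ∈ D, LinearIndependent ℝ (fun i : ↥s => g' ↑i)} := hLI
  filter_upwards [hLIopen.mem_nhds hLImem, hev] with g' h1 h2
  refine ⟨h1, fun s hsD t htD => ⟨(hpairs s hsD t htD).1, ?_⟩⟩
  obtain ⟨φ', hφ0, hφP, hφN⟩ := h2 s hsD t htD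
  exact cone_eq_of_sep g' s t φ' hφ0 hφP hφN
end
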